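/- Let f : [0,1] → ℝ be differentiable with f(0) = 0 and |x·f'(x)| ≤ C·|f(x)| on [0,1]. Suppose n > C is a natural number and |f(x)| < x^n for all x ∈ (0, x̄) where x̄ ∈ (0,1]. Then the upper Darboux integral of |f'| over [0, x̄] is strictly less than x̄^n. -/

import Mathlib

open Set

/-- `p` is a partition of `[a,b]` into `n` subintervals. -/
def IsPartition (a b : ℝ) (n : ℕ) (p : ℕ → ℝ) : Prop :=
  p 0 = a ∧ p n = b ∧ ∀ i < n, p i ≤ p (i + 1)

/-- Lower Darboux sum of `h` with respect to the partition `p`. -/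
noncomputable def lowerSum (h : ℝ → ℝ) (n : ℕ) (p : ℕ → ℝ) : ℝ :=
  ∑ i ∈ Finset.range n, sInf (h '' Set.Icc (p i) (p (i + 1))) * (p (i + 1) - p i)

/-- Upper Darboux sum of `h` with respect to the partition `p`. -/
noncomputable def upperSum (h : ℝ → ℝ) (n : ℕ) (p : ℕ → ℝ) : ℝ :=
  ∑ i ∈ Finset.range n, sSup (h '' Set.Icc (p i) (p (i + 1))) * (p (i + 1) - p i)

/-- Lower Darboux integral of `h` over `[a,b]`. -/
noncomputable def lowerIntegral (h : ℝ → ℝ) (a b : ℝ) : ℝ :=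
  sSup {s | ∃ n : ℕ, ∃ p : ℕ → ℝ, IsPartition a b n p ∧ s = lowerSum h n p}

/-- Upper Darboux integral of `h` over `[a,b]`. -/
noncomputable def upperIntegral (h : ℝ → ℝ) (a b : ℝ) : ℝ :=
  sInf {s | ∃ n : ℕ, ∃ p : ℕ → ℝ, IsPartition a b n p ∧ s = upperSum h n p}

lemma aux_sum_pow (m : ℕ) (N : ℕ) :
    ((m : ℝ) + 1) * ∑ i ∈ Finset.range N, ((i : ℝ) + 1) ^ m ≤ ((N : ℝ) + 1) ^ (m + 1) - 1 := by
  induction N with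
  | zero => simp
  | succ N ih =>
    rw [Finset.sum_range_succ, mul_add]
    have hk : (0 : ℝ) < (N : ℝ) + 1 := by positivity
    set k : ℝ := (N : ℝ) + 1 with hkdef
    have h1 : 1 + ((m : ℝ) + 1) * (1 / k) ≤ (1 + 1 / k) ^ (m + 1) := by
      have hk1 : (0 : ℝ) ≤ 1 / k := by positivity
      have := one_add_mul_le_pow (a := 1 / k) (by linarith) (m + 1)
      push_cast at this
      linarith
    have h2 : (1 + ((m : ℝ) + 1) * (1 / k)) * k ^ (m + 1)
        ≤ (1 + 1 / k) ^ (m + 1) * k ^ (m + 1) :=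
      mul_le_mul_of_nonneg_right h1 (by positivity)
    have e1 : (1 + 1 / k) ^ (m + 1) * k ^ (m + 1) = (k + 1) ^ (m + 1) := by
      rw [← mul_pow]; congr 1; field_simp
    have e2 : (1 + ((m : ℝ) + 1) * (1 / k)) * k ^ (m + 1)
        = k ^ (m + 1) + ((m : ℝ) + 1) * k ^ m := by
      rw [pow_succ]; field_simp
    rw [e1, e2] at h2
    have e3 : ((N : ℝ) + 1 + 1) = k + 1 := by rw [hkdef]
    push_cast
    rw [e3]
    push_cast at ih
    linarith

/-- Quantitative estimate: if `|f x| < x ^ n` on `(0, xb)` with `n > C`, then the upper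
Darboux integral of `|f'|` over `[0, xb]` is strictly below `xb ^ n`. -/
theorem stmt_12 (f f' : ℝ → ℝ) (C : ℝ) (hCpos : 0 < C)
    (hdiff : ∀ x ∈ Set.Icc (0 : ℝ) 1, HasDerivWithinAt f (f' x) (Set.Icc (0 : ℝ) 1) x)
    (h0 : f 0 = 0)
    (hC : ∀ x ∈ Set.Icc (0 : ℝ) 1, |x * f' x| ≤ C * |f x|)
    (n : ℕ) (hn : C < n) (xb : ℝ) (hxb : xb ∈ Set.Ioc (0 : ℝ) 1)
    (hlt : ∀ x ∈ Set.Ioo (0 : ℝ) xb, |f x| < x ^ n) :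
    upperIntegral (fun x => |f' x|) 0 xb < xb ^ n := by
  obtain ⟨hxb0, hxb1⟩ := hxb
  have hnR : (0 : ℝ) < n := hCpos.trans hn
  have hn0 : 0 < n := by exact_mod_cast hnR
  have hm : n - 1 + 1 = n := Nat.succ_pred_eq_of_pos hn0
  -- |f xb| ≤ xb ^ n by continuity
  have hfxb : |f xb| ≤ xb ^ n := by
    have hc : ContinuousWithinAt f (Set.Icc 0 1) xb :=
      (hdiff xb ⟨hxb0.le, hxb1⟩).continuousWithinAt
    have hc2 : ContinuousWithinAt f (Set.Ioo 0 xb) xb :=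
      hc.mono (fun y hy => ⟨hy.1.le, hy.2.le.trans hxb1⟩)
    have hne : (nhdsWithin xb (Set.Ioo 0 xb)).NeBot := by
      rw [← mem_closure_iff_nhdsWithin_neBot, closure_Ioo hxb0.ne]
      exact ⟨hxb0.le, le_refl xb⟩
    have t1 : Filter.Tendsto (fun x => |f x|) (nhdsWithin xb (Set.Ioo 0 xb)) (nhds |f xb|) :=
      (continuous_abs.tendsto _).comp hc2
    have t2 : Filter.Tendsto (fun x : ℝ => x ^ n) (nhdsWithin xb (Set.Ioo 0 xb))
        (nhds (xb ^ n)) :=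
      ((continuous_pow n).tendsto xb).mono_left nhdsWithin_le_nhds
    exact le_of_tendsto_of_tendsto t1 t2
      (eventually_mem_nhdsWithin.mono (fun x hx => (hlt x hx).le))
  -- pointwise bound on the derivative
  have hbound : ∀ x ∈ Set.Ioc (0 : ℝ) xb, |f' x| ≤ C * x ^ (n - 1) := by
    intro x hx
    have hx0 : 0 < x := hx.1
    have hfx : |f x| ≤ x ^ n := by
      rcases lt_or_eq_of_le hx.2 with h | h
      · exact (hlt x ⟨hx0, h⟩).le
      · rw [h]; exact hfxb
    have h1 := hC x ⟨hx0.le, hx.2.trans hxb1⟩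
    rw [abs_mul, abs_of_pos hx0] at h1
    have h2 : x * |f' x| ≤ C * (x ^ (n - 1) * x) := by
      have : C * |f x| ≤ C * x ^ n := mul_le_mul_of_nonneg_left hfx hCpos.le
      have e : x ^ n = x ^ (n - 1) * x := by rw [← pow_succ, hm]
      rw [e] at this
      linarith
    have h4 : |f' x| * x ≤ C * x ^ (n - 1) * x := by
      calc |f' x| * x = x * |f' x| := mul_comm _ _
        _ ≤ C * (x ^ (n - 1) * x) := h2
        _ = C * x ^ (n - 1) * x := by ring
    exact le_of_mul_le_mul_right h4 hx0
  -- choose a fine enough uniform partition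
  set A : ℝ := |f' 0| * xb with hA
  have hxbn : (0 : ℝ) < xb ^ n := by positivity
  have hlim : Filter.Tendsto
      (fun N : ℕ => A * (1 / N) + C / n * xb ^ n * (1 + 1 / N) ^ n)
      Filter.atTop (nhds (A * 0 + C / n * xb ^ n * (1 + 0) ^ n)) := by
    apply Filter.Tendsto.add
    · exact tendsto_const_nhds.mul tendsto_one_div_atTop_nhds_zero_nat
    · exact tendsto_const_nhds.mul
        ((tendsto_const_nhds.add tendsto_one_div_atTop_nhds_zero_nat).pow n)
  have hlt2 : A * 0 + C / n * xb ^ n * ((1 : ℝ) + 0) ^ n < xb ^ n := by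
    have hCn : C / n < 1 := (div_lt_one hnR).mpr hn
    have : C / n * xb ^ n < 1 * xb ^ n := by
      exact mul_lt_mul_of_pos_right hCn hxbn
    simp only [mul_zero, zero_add, add_zero, one_pow, mul_one]
    linarith
  obtain ⟨N, hFN, hN1⟩ :=
    ((hlim.eventually_lt_const hlt2).and (Filter.eventually_ge_atTop 1)).exists
  have hNpos : (0 : ℝ) < N := by exact_mod_cast hN1
  set p : ℕ → ℝ := fun i => i * xb / N with hp
  have hpart : IsPartition 0 xb N p := by
    refine ⟨by simp [hp], ?_, fun i hi => ?_⟩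
    · simp only [hp]; field_simp
    · simp only [hp]
      push_cast
      gcongr <;> linarith
  have hlen : ∀ i : ℕ, p (i + 1) - p i = xb / N := by
    intro i; simp only [hp]; push_cast; ring
  have hlen0 : (0 : ℝ) ≤ xb / N := by positivity
  -- bound on each supremum
  have hsup : ∀ i ∈ Finset.range N,
      sSup ((fun x => |f' x|) '' Set.Icc (p i) (p (i + 1)))
        ≤ (if i = 0 then |f' 0| else 0) + C * (p (i + 1)) ^ (n - 1) := by
    intro i hi
    rw [Finset.mem_range] at hi
    have hpi : 0 ≤ p i := by simp only [hp]; positivity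
    have hpii : p i ≤ p (i + 1) := hpart.2.2 i hi
    have hpnn : 0 ≤ p (i + 1) := hpi.trans hpii
    have hub : p (i + 1) ≤ xb := by
      simp only [hp]
      rw [div_le_iff₀ hNpos]
      have hiN : ((i : ℝ) + 1) ≤ (N : ℝ) := by exact_mod_cast hi
      push_cast
      nlinarith
    apply csSup_le ((Set.nonempty_Icc.mpr hpii).image _)
    rintro y ⟨x, hxmem, rfl⟩
    have hxxb : x ≤ xb := hxmem.2.trans hub
    have hx0 : 0 ≤ x := hpi.trans hxmem.1
    have hite : 0 ≤ (if i = 0 then |f' 0| else 0) := by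
      split <;> simp [abs_nonneg]
    rcases eq_or_lt_of_le hx0 with h | h
    · have hi0 : i = 0 := by
        by_contra hne
        have h1i : (1 : ℝ) ≤ (i : ℝ) := by exact_mod_cast Nat.one_le_iff_ne_zero.mpr hne
        have : 0 < p i := by
          simp only [hp]
          apply div_pos _ hNpos
          nlinarith
        linarith [hxmem.1]
      subst hi0
      have hC1 : 0 ≤ C * (p (0 + 1)) ^ (n - 1) :=
        mul_nonneg hCpos.le (pow_nonneg hpnn _)
      rw [← h]
      simp only [if_pos]
      linarith
    · have hb := hbound x ⟨h, hxxb⟩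
      have h2 : C * x ^ (n - 1) ≤ C * (p (i + 1)) ^ (n - 1) :=
        mul_le_mul_of_nonneg_left (pow_le_pow_left₀ h.le hxmem.2 _) hCpos.le
      linarith
  -- estimate the upper sum
  have hsum : upperSum (fun x => |f' x|) N p
      ≤ A * (1 / N) + C / n * xb ^ n * (1 + 1 / N) ^ n := by
    have step1 : upperSum (fun x => |f' x|) N p
        ≤ ∑ i ∈ Finset.range N,
            ((if i = 0 then |f' 0| else 0) + C * (p (i + 1)) ^ (n - 1)) * (xb / N) := by
      unfold upperSum
      apply Finset.sum_le_sum
      intro i hi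
      rw [hlen i]
      exact mul_le_mul_of_nonneg_right (hsup i hi) hlen0
    have split : ∑ i ∈ Finset.range N,
          ((if i = 0 then |f' 0| else 0) + C * (p (i + 1)) ^ (n - 1)) * (xb / N)
        = (∑ i ∈ Finset.range N, (if i = 0 then |f' 0| * (xb / N) else 0))
          + ∑ i ∈ Finset.range N, C * (p (i + 1)) ^ (n - 1) * (xb / N) := by
      rw [← Finset.sum_add_distrib]
      apply Finset.sum_congr rfl
      intro i _
      split <;> ring
    have first : (∑ i ∈ Finset.range N, (if i = 0 then |f' 0| * (xb / N) else 0))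
        = A * (1 / N) := by
      rw [Finset.sum_ite_eq' (Finset.range N) 0 (fun _ => |f' 0| * (xb / N))]
      rw [if_pos (Finset.mem_range.mpr (by omega))]
      rw [hA]; ring
    have e4 : ∀ i : ℕ, C * (p (i + 1)) ^ (n - 1) * (xb / N)
        = C * (xb / N) ^ n * ((i : ℝ) + 1) ^ (n - 1) := by
      intro i
      simp only [hp]
      push_cast
      have e5 : ((i : ℝ) + 1) * xb / (N : ℝ) = ((i : ℝ) + 1) * (xb / N) := by ring
      have epow : (xb / N : ℝ) ^ n = (xb / N) ^ (n - 1) * (xb / N) := by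
        rw [← pow_succ, hm]
      rw [e5, mul_pow, epow]
      ring
    have second : ∑ i ∈ Finset.range N, C * (p (i + 1)) ^ (n - 1) * (xb / N)
        ≤ C / n * xb ^ n * (1 + 1 / N) ^ n := by
      have : ∑ i ∈ Finset.range N, C * (p (i + 1)) ^ (n - 1) * (xb / N)
          = C * (xb / N) ^ n * ∑ i ∈ Finset.range N, ((i : ℝ) + 1) ^ (n - 1) := by
        rw [Finset.mul_sum]
        exact Finset.sum_congr rfl (fun i _ => e4 i)
      rw [this]
      have haux := aux_sum_pow (n - 1) N
      rw [hm] at haux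
      have hcast : (((n - 1 : ℕ) : ℝ) + 1) = (n : ℝ) := by exact_mod_cast hm
      rw [hcast] at haux
      -- haux : n * S ≤ (N+1)^n - 1
      have hu : (0 : ℝ) ≤ (xb / N) ^ n := by positivity
      have e6 : (xb / N) ^ n * ((N : ℝ) + 1) ^ n = xb ^ n * (1 + 1 / N) ^ n := by
        rw [← mul_pow, ← mul_pow]
        congr 1
        field_simp
      have hS : ∑ i ∈ Finset.range N, ((i : ℝ) + 1) ^ (n - 1)
          ≤ (((N : ℝ) + 1) ^ n - 1) / n := by
        rw [le_div_iff₀ hnR]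
        linarith [haux]
      calc C * (xb / N) ^ n * ∑ i ∈ Finset.range N, ((i : ℝ) + 1) ^ (n - 1)
          ≤ C * (xb / N) ^ n * ((((N : ℝ) + 1) ^ n - 1) / n) := by
            apply mul_le_mul_of_nonneg_left hS (by positivity)
        _ ≤ C * (xb / N) ^ n * (((N : ℝ) + 1) ^ n / n) := by
            apply mul_le_mul_of_nonneg_left _ (by positivity)
            gcongr
            linarith
        _ = C / n * ((xb / N) ^ n * ((N : ℝ) + 1) ^ n) := by ring
        _ = C / n * (xb ^ n * (1 + 1 / N) ^ n) := by rw [e6]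
        _ = C / n * xb ^ n * (1 + 1 / N) ^ n := by ring
    calc upperSum (fun x => |f' x|) N p
        ≤ _ := step1
      _ = _ + _ := split
      _ ≤ A * (1 / N) + C / n * xb ^ n * (1 + 1 / N) ^ n := by
          rw [first]; linarith [second]
  -- conclude
  have hbdd : BddBelow {s | ∃ m : ℕ, ∃ q : ℕ → ℝ,
      IsPartition 0 xb m q ∧ s = upperSum (fun x => |f' x|) m q} := by
    refine ⟨0, ?_⟩
    rintro s ⟨m, q, hq, rfl⟩
    apply Finset.sum_nonneg
    intro i hi
    rw [Finset.mem_range] at hi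
    apply mul_nonneg
    · apply Real.sSup_nonneg
      rintro y ⟨x, -, rfl⟩
      exact abs_nonneg _
    · linarith [hq.2.2 i hi]
  have hle : upperIntegral (fun x => |f' x|) 0 xb ≤ upperSum (fun x => |f' x|) N p :=
    csInf_le hbdd ⟨N, p, hpart, rfl⟩
  calc upperIntegral (fun x => |f' x|) 0 xb
      ≤ upperSum (fun x => |f' x|) N p := hle
    _ ≤ A * (1 / N) + C / n * xb ^ n * (1 + 1 / N) ^ n := hsum
    _ < xb ^ n := hFN
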